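/- For σ = −1 and λ = 0, with 0 < θ < π and δ = sin θ, the limit as θ → π⁻ of B(θ) = ∮ (sinθ/(z·w̃))dz on the curve w̃² = −2z²(cosθ − z) − 4sin²θ (integrated over the cycle around the largest real root and infinity) equals π/2; more generally for small λ̃, lim_{θ→±π∓} B(θ) = ±π/2 + arcsin(√2 λ̃). -/

import Mathlib

noncomputable section

/-- The curve w̃² = −2z²(cosθ − z) − 4(sinθ − λ̃z)². -/
def Qt (lam θ : ℝ) (z : ℝ) : ℝ :=
  -2 * z ^ 2 * (Real.cos θ - z) - 4 * (Real.sin θ - lam * z) ^ 2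

/-- The largest real root of Qt. -/
def rt (lam θ : ℝ) : ℝ := sSup {z : ℝ | Qt lam θ z = 0}

/-- The winding number integral B(θ) = ∮ (sinθ/(z w̃)) dz over the cycle around the
largest real root and infinity. -/
def B (lam θ : ℝ) : ℝ :=
  2 * ∫ z in Set.Ioi (rt lam θ), Real.sin θ / (z * Real.sqrt (Qt lam θ z))

open Real Set MeasureTheory Filter intervalIntegral Topology

set_option maxHeartbeats 1000000

namespace S13


def gf (l e c u : ℝ) : ℝ := 2*e*u^3 - 2*c*u^2 - 4*(1-l*u)^2
def gd (l e c u : ℝ) : ℝ := 6*e*u^2 - 4*c*u + 8*l - 8*l^2*u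
def Gf (l u : ℝ) : ℝ := 2*(1-2*l^2)*u^2 + 8*l*u - 4
def u0 (l : ℝ) : ℝ := Real.sqrt 2/(1+Real.sqrt 2*l)
def um (l : ℝ) : ℝ := -Real.sqrt 2/(1-Real.sqrt 2*l)

variable {l e c : ℝ}

lemma hs2 : (Real.sqrt 2)^2 = 2 := Real.sq_sqrt (by norm_num)

lemma s2_gt : (1.4:ℝ) < Real.sqrt 2 := by
  rw [show (1.4:ℝ) = Real.sqrt (1.4^2) from (Real.sqrt_sq (by norm_num)).symm]
  apply Real.sqrt_lt_sqrt <;> norm_num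

lemma habs (hl : 2*l^2 < 1) : -1 < Real.sqrt 2 * l ∧ Real.sqrt 2 * l < 1 := by
  have h := hs2
  constructor <;> nlinarith [sq_nonneg (Real.sqrt 2 * l - 1), sq_nonneg (Real.sqrt 2 * l + 1),
    Real.sqrt_nonneg 2]

lemma hden1 (hl : 2*l^2 < 1) : 0 < 1 + Real.sqrt 2 * l := by linarith [(habs hl).1]
lemma hden2 (hl : 2*l^2 < 1) : 0 < 1 - Real.sqrt 2 * l := by linarith [(habs hl).2]

lemma u0_gt_half (hl : 2*l^2 < 1) : 1/2 < u0 l := by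
  have h1 := hden1 hl
  rw [u0, lt_div_iff₀ h1]
  nlinarith [s2_gt, (habs hl).2]

lemma u0_pos (hl : 2*l^2 < 1) : 0 < u0 l := by linarith [u0_gt_half hl]

lemma um_neg (hl : 2*l^2 < 1) : um l < 0 := by
  have h2 := hden2 hl
  rw [um]
  exact div_neg_of_neg_of_pos (by linarith [s2_gt]) h2

lemma poly1 (s l u : ℝ) (hs : s^2 = 2) :
    2*(1-2*l^2)*u^2+8*l*u-4 = 2*((1+s*l)*u - s)*((1-s*l)*u + s) := by
  linear_combination (2*l^2*u^2 - 4*l*u + 2) * hs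

lemma poly2 (s l : ℝ) (hs : s^2 = 2) :
    2*(1-2*l^2) = 2*(1+s*l)*(1-s*l) := by
  linear_combination (2*l^2) * hs

lemma Gf_factor (hl : 2*l^2 < 1) (u : ℝ) :
    Gf l u = 2*(1-2*l^2)*(u - u0 l)*(u - um l) := by
  have h1 := (hden1 hl).ne'
  have h2 := (hden2 hl).ne'
  rw [Gf, poly1 (Real.sqrt 2) l u hs2, poly2 (Real.sqrt 2) l hs2, u0, um]
  field_simp
  ring

lemma Gp_u0 (hl : 2*l^2 < 1) : (4-8*l^2)*(u0 l) + 8*l = 4*Real.sqrt 2 := by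
  have h1 := (hden1 hl).ne'
  rw [u0]
  field_simp
  rw [div_add' _ _ _ (by rwa [mul_comm] at h1), div_eq_iff (by rwa [mul_comm] at h1)]
  linear_combination (-4*l) * hs2

lemma sqrt2_div_u0 (hl : 2*l^2 < 1) : Real.sqrt 2 / u0 l = 1 + Real.sqrt 2 * l := by
  have h1 := (hden1 hl).ne'
  have hs0 : Real.sqrt 2 ≠ 0 := by positivity
  rw [u0]
  field_simp

lemma gf_sub_Gf (l e c u : ℝ) : gf l e c u - Gf l u = 2*e*u^3 - 2*(c+1)*u^2 := by
  simp only [gf, Gf]; ring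

lemma gf_hasDerivAt (l e c u : ℝ) : HasDerivAt (gf l e c) (gd l e c u) u := by
  have h1 : HasDerivAt (fun u : ℝ => 2*e*u^3) (2*e*(3*u^2)) u := by
    simpa using (hasDerivAt_pow 3 u).const_mul (2*e)
  have h2 : HasDerivAt (fun u : ℝ => 2*c*u^2) (2*c*(2*u)) u := by
    simpa using (hasDerivAt_pow 2 u).const_mul (2*c)
  have h3 : HasDerivAt (fun u : ℝ => 1 - l*u) (-l) u := by
    simpa using ((hasDerivAt_id u).const_mul l).const_sub 1
  have h4 : HasDerivAt (fun u : ℝ => 4*(1-l*u)^2) (4*(2*(1-l*u)*(-l))) u := by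
    simpa using ((h3.pow 2).const_mul 4)
  have heq : gf l e c = fun u : ℝ => 2*e*u^3 - 2*c*u^2 - 4*(1-l*u)^2 := rfl
  rw [heq]
  refine ((h1.sub h2).sub h4).congr_deriv ?_
  simp only [gd]; push_cast; ring

lemma gf_cont (l e c : ℝ) : Continuous (gf l e c) := by
  unfold gf; continuity

lemma abs_sqrt_sub_sqrt_le {x y : ℝ} (hx : 0 ≤ x) (hy : 0 ≤ y) :
    |Real.sqrt x - Real.sqrt y| ≤ Real.sqrt |x - y| := by
  wlog h : y ≤ x generalizing x y
  · rw [abs_sub_comm, abs_sub_comm x y]; exact this hy hx (le_of_not_ge h)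
  rw [abs_of_nonneg (by linarith : 0 ≤ x - y)]
  rw [abs_of_nonneg (sub_nonneg.mpr (Real.sqrt_le_sqrt h))]
  have h1 : Real.sqrt x ≤ Real.sqrt y + Real.sqrt (x - y) := by
    have hxy : (0:ℝ) ≤ x - y := by linarith
    have hy' := Real.sqrt_nonneg y; have hxy' := Real.sqrt_nonneg (x-y)
    have hyy := Real.sq_sqrt hy; have hxy2 := Real.sq_sqrt hxy
    calc Real.sqrt x ≤ Real.sqrt ((Real.sqrt y + Real.sqrt (x-y))^2) :=
          Real.sqrt_le_sqrt (by nlinarith)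
      _ = Real.sqrt y + Real.sqrt (x-y) := Real.sqrt_sq (by positivity)
  linarith

lemma poly4 (s l u : ℝ) (hs : s^2 = 2) (hu : u ≠ 0) :
    1 - (s*l - s/u)^2 = (2*(1-2*l^2)*u^2+8*l*u-4)/(2*u^2) := by
  field_simp
  linear_combination (-2*(l*u-1)^2) * hs

lemma Gf_pos (hl : 2*l^2 < 1) {u : ℝ} (hu : u0 l < u) : 0 < Gf l u := by
  rw [Gf_factor hl]
  have h1 := um_neg hl; have h2 := u0_pos hl
  have : (0:ℝ) < 2*(1-2*l^2) := by linarith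
  exact mul_pos (mul_pos this (by linarith)) (by linarith)

lemma psi_int (hl : 2*l^2 < 1) {v : ℝ} (hv : u0 l < v) :
    IntegrableOn (fun u => 1/(u*Real.sqrt (Gf l u))) (Ioi v) volume ∧
    ∫ u in Ioi v, 1/(u*Real.sqrt (Gf l u))
      = Real.arcsin (Real.sqrt 2*l)/2 - Real.arcsin (Real.sqrt 2*l - Real.sqrt 2/v)/2 := by
  have hu0 := u0_pos hl
  have hv0 : 0 < v := lt_trans hu0 hv
  set F : ℝ → ℝ := fun u => Real.arcsin (Real.sqrt 2*l - Real.sqrt 2/u)/2 with hF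
  have hderiv : ∀ u ∈ Ioi v, HasDerivAt F (1/(u*Real.sqrt (Gf l u))) u := by
    intro u hu
    have hu0' : u0 l < u := lt_trans hv hu
    have hupos : 0 < u := lt_trans hv0 hu
    have hGpos : 0 < Gf l u := Gf_pos hl hu0'
    have hinner : HasDerivAt (fun x : ℝ => Real.sqrt 2*l - Real.sqrt 2/x)
        (Real.sqrt 2/u^2) u := by
      have h : HasDerivAt (fun x : ℝ => Real.sqrt 2 / x) (-(Real.sqrt 2 / u^2)) u := by
        simpa [div_eq_mul_inv, mul_neg] using (hasDerivAt_inv hupos.ne').const_mul (Real.sqrt 2)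
      simpa using h.const_sub (Real.sqrt 2*l)
    have hne1 : Real.sqrt 2*l - Real.sqrt 2/u ≠ -1 := by
      have : Real.sqrt 2/u < Real.sqrt 2/u0 l := by
        apply div_lt_div_of_pos_left (by positivity) hu0 hu0'
      rw [sqrt2_div_u0 hl] at this
      intro h; rw [sub_eq_iff_eq_add] at h; linarith
    have hne2 : Real.sqrt 2*l - Real.sqrt 2/u ≠ 1 := by
      have h1 : 0 < Real.sqrt 2/u := by positivity
      have := (habs hl).2
      intro h; nlinarith
    have harc := (Real.hasDerivAt_arcsin hne1 hne2).comp u hinner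
    have hval : (1 / Real.sqrt (1 - (Real.sqrt 2*l - Real.sqrt 2/u)^2)) * (Real.sqrt 2/u^2)
        = 2 * (1/(u*Real.sqrt (Gf l u))) := by
      rw [poly4 (Real.sqrt 2) l u hs2 hupos.ne', show (2*(1-2*l^2)*u^2+8*l*u-4) = Gf l u from rfl]
      rw [Real.sqrt_div hGpos.le, show Real.sqrt (2*u^2) = Real.sqrt 2 * u by
        rw [Real.sqrt_mul (by norm_num), Real.sqrt_sq hupos.le]]
      have hsG : 0 < Real.sqrt (Gf l u) := Real.sqrt_pos.mpr hGpos
      have hs0 : (0:ℝ) < Real.sqrt 2 := by positivity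
      field_simp
      linear_combination hs2
    have := harc.div_const 2
    rw [hF]
    refine this.congr_deriv ?_
    rw [hval]; ring
  have hpos : ∀ u ∈ Ioi v, 0 ≤ 1/(u*Real.sqrt (Gf l u)) := by
    intro u hu
    have hupos : 0 < u := lt_trans hv0 hu
    positivity
  have hcont : ContinuousWithinAt F (Ici v) v := by
    apply ContinuousAt.continuousWithinAt
    apply ContinuousAt.div_const
    exact Real.continuous_arcsin.continuousAt.comp
      ((continuousAt_const.sub (continuousAt_const.div continuousAt_id hv0.ne')))
  have htends : Tendsto F atTop (𝓝 (Real.arcsin (Real.sqrt 2*l)/2)) := by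
    apply Tendsto.div_const
    apply (Real.continuous_arcsin.tendsto _).comp
    have : Tendsto (fun u : ℝ => Real.sqrt 2/u) atTop (𝓝 0) := by
      simpa [div_eq_mul_inv] using tendsto_inv_atTop_zero.const_mul (Real.sqrt 2)
    simpa using tendsto_const_nhds.sub this
  exact ⟨integrableOn_Ioi_deriv_of_nonneg hcont hderiv hpos htends,
    by rw [integral_Ioi_of_hasDerivAt_of_nonneg hcont hderiv hpos htends]⟩

lemma cov (l θ R : ℝ) (he0 : 0 < Real.sin θ)
    (hgR : IsGreatest {u : ℝ | gf l (Real.sin θ) (Real.cos θ) u = 0} R) :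
    B l θ = 2 * ∫ u in Ioi R, 1/(u*Real.sqrt (gf l (Real.sin θ) (Real.cos θ) u)) := by
  set e := Real.sin θ with he
  set c := Real.cos θ with hc
  have hQt : ∀ u, Qt l θ (e*u) = e^2 * gf l e c u := by
    intro u; simp only [Qt, gf, ← he, ← hc]; ring
  have he2 : e^2 ≠ 0 := pow_ne_zero 2 he0.ne'
  have hrt : rt l θ = e*R := by
    apply IsGreatest.csSup_eq
    constructor
    · show Qt l θ (e*R) = 0
      rw [hQt R, hgR.1, mul_zero]
    · intro z hz
      have hz0 : Qt l θ (e*(z/e)) = 0 := by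
        rw [mul_div_cancel₀ _ he0.ne']; exact hz
      rw [hQt] at hz0
      have hz' : gf l e c (z/e) = 0 := (mul_eq_zero.mp hz0).resolve_left he2
      have hle := hgR.2 hz'
      calc z = e*(z/e) := by field_simp
        _ ≤ e*R := mul_le_mul_of_nonneg_left hle he0.le
  rw [B, hrt]
  congr 1
  have key := integral_comp_mul_left_Ioi (fun z => e/(z*Real.sqrt (Qt l θ z))) R he0
  rw [smul_eq_mul] at key
  have h1 : ∫ x in Ioi (e*R), e/(x*Real.sqrt (Qt l θ x))
      = e * ∫ x in Ioi R, e/((e*x)*Real.sqrt (Qt l θ (e*x))) := by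
    rw [key, ← mul_assoc, mul_inv_cancel₀ he0.ne', one_mul]
  rw [← he, h1, ← MeasureTheory.integral_const_mul]
  apply setIntegral_congr_fun measurableSet_Ioi
  intro x _
  simp only []
  rw [hQt x, Real.sqrt_mul (sq_nonneg e), Real.sqrt_sq he0.le]
  rcases eq_or_ne (x*Real.sqrt (gf l e c x)) 0 with h|h
  · have h2 : (e*x)*(e*Real.sqrt (gf l e c x)) = e^2*(x*Real.sqrt (gf l e c x)) := by ring
    rw [h2, h, mul_zero, div_zero, mul_zero, eq_comm, div_zero]
  · have hx : x ≠ 0 := fun hx => h (by rw [hx, zero_mul])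
    have hs : Real.sqrt (gf l e c x) ≠ 0 := fun hs => h (by rw [hs, mul_zero])
    field_simp

lemma aux_rho_lt (e c T σ ρmin : ℝ) (hT0 : 0 < T) (he : e < σ) (hc : c+1 < σ)
    (he0 : 0 ≤ e) (hc0 : 0 ≤ c+1) (hσ : σ*(4*(T^3+T^2)) ≤ ρmin) :
    2*e*T^3+2*(c+1)*T^2 < ρmin/2 := by
  have hT3 : (0:ℝ) < T^3 := by positivity
  have hT2 : (0:ℝ) < T^2 := by positivity
  nlinarith [mul_lt_mul_of_pos_right he hT3, mul_lt_mul_of_pos_right hc hT2]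

lemma aux_rho' (e c T σ : ℝ) (hT0 : 0 < T) (he : e < σ) (hc : c+1 < σ)
    (he0 : 0 ≤ e) (hc0 : 0 ≤ c+1) (hσ : σ*(6*T^2+4*T) ≤ 1) :
    6*e*T^2+4*(c+1)*T ≤ 2 := by
  have hT2 : (0:ℝ) < T^2 := by positivity
  nlinarith [mul_lt_mul_of_pos_right he hT2, mul_lt_mul_of_pos_right hc hT0]

lemma aux_approx (l e c u T : ℝ) (he0 : 0 ≤ e) (hc0 : 0 ≤ c+1) (hu0 : 0 ≤ u) (huT : u ≤ T) :
    |gf l e c u - Gf l u| ≤ 2*e*T^3+2*(c+1)*T^2 := by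
  have hd : gf l e c u - Gf l u = 2*e*u^3 - 2*(c+1)*u^2 := by
    simp only [gf, Gf]; ring
  rw [hd, abs_le]
  have h3 : u^3 ≤ T^3 := pow_le_pow_left₀ hu0 huT 3
  have h2 : u^2 ≤ T^2 := pow_le_pow_left₀ hu0 huT 2
  constructor <;>
    nlinarith [mul_nonneg he0 (pow_nonneg hu0 3), mul_nonneg hc0 (pow_nonneg hu0 2),
      mul_le_mul_of_nonneg_left h3 he0, mul_le_mul_of_nonneg_left h2 hc0]

lemma aux_grow (l e c k u : ℝ) (hk : k = 1-2*l^2) (hk0 : 0 < k) (he0 : 0 ≤ e)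
    (hc0 : 0 ≤ c+1) (hck : c+1 ≤ k/2) (hu1 : 1 ≤ u) (hukk : 16*|l|+8 ≤ k*u) :
    k/2*u^2 ≤ gf l e c u := by
  have hla := neg_abs_le l
  have hu0 : (0:ℝ) ≤ u := by linarith
  have hkey : 8*(|l|)*u + 4 ≤ k/2*u^2 := by nlinarith [abs_nonneg l]
  simp only [gf]
  nlinarith [mul_nonneg he0 (pow_nonneg hu0 3), mul_nonneg hc0 (sq_nonneg u),
    mul_le_mul_of_nonneg_right hla hu0, sq_nonneg u,
    mul_le_mul_of_nonneg_right hck (sq_nonneg u)]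

lemma aux_Grow (l k u : ℝ) (hk : k = 1-2*l^2) (hk0 : 0 < k) (hu1 : 1 ≤ u)
    (hukk : 16*|l|+8 ≤ k*u) : k/2*u^2 ≤ Gf l u := by
  have hla := neg_abs_le l
  have hu0 : (0:ℝ) ≤ u := by linarith
  have hkey : 8*(|l|)*u + 4 ≤ k/2*u^2 := by nlinarith [abs_nonneg l]
  simp only [Gf]
  nlinarith [mul_le_mul_of_nonneg_right hla hu0, sq_nonneg u]

lemma aux_Gmono {l : ℝ} (hl : 2*l^2 < 1) {v u : ℝ} (hv : u0 l < v) (h : v ≤ u) :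
    Gf l v ≤ Gf l u := by
  rw [Gf_factor hl, Gf_factor hl]
  have h1 := um_neg hl
  have h2 := u0_gt_half hl
  have h3 : (0:ℝ) < v - u0 l := by linarith
  have h4 : (0:ℝ) < v - um l := by linarith
  have := mul_le_mul (by linarith : v - u0 l ≤ u - u0 l) (by linarith : v - um l ≤ u - um l)
    h4.le (by linarith)
  nlinarith

lemma aux_Gneg {l : ℝ} (hl : 2*l^2 < 1) {α : ℝ} (hα0 : 0 < α) (hα : α ≤ 1/4) :
    Gf l (u0 l - α) ≤ -((1-2*l^2)*α/2) := by
  rw [Gf_factor hl]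
  have h1 := um_neg hl
  have h2 := u0_gt_half hl
  have hk0 : (0:ℝ) < 1-2*l^2 := by linarith
  have hX : (1:ℝ)/4 ≤ u0 l - α - um l := by linarith
  nlinarith [mul_le_mul_of_nonneg_left hX (by positivity : (0:ℝ) ≤ 2*((1-2*l^2)*α))]

lemma aux_gd {l : ℝ} (hl : 2*l^2 < 1) (e c u T : ℝ) (he0 : 0 ≤ e) (hc0 : 0 ≤ c+1)
    (hu0 : 0 ≤ u) (huT : u ≤ T) (hpert : 6*e*T^2+4*(c+1)*T ≤ 2)
    (hw : |u - u0 l| ≤ 1/4) : 2 ≤ gd l e c u := by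
  have hGp := Gp_u0 hl
  have hl8 : (0:ℝ) ≤ 4-8*l^2 ∧ 4-8*l^2 ≤ 4 := by constructor <;> nlinarith [sq_nonneg l]
  obtain ⟨hw1, hw2⟩ := abs_le.mp hw
  have e1 : -1 ≤ (4-8*l^2)*(u - u0 l) := by
    nlinarith [mul_le_mul_of_nonneg_left hw1 hl8.1, mul_le_mul_of_nonneg_left hw2 hl8.1]
  have e2 : (4-8*l^2)*u + 8*l = 4*Real.sqrt 2 + (4-8*l^2)*(u - u0 l) := by
    linear_combination hGp
  have hpert' : 4*(c+1)*u ≤ 2 := by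
    nlinarith [mul_nonneg he0 (sq_nonneg u), mul_le_mul_of_nonneg_left huT (by linarith : (0:ℝ) ≤ 4*(c+1)),
      mul_nonneg he0 (sq_nonneg T)]
  have e3 : 0 ≤ 6*e*u^2 := by positivity
  simp only [gd]
  nlinarith [s2_gt]

lemma main (l : ℝ) (hl : 2*l^2 < 1) :
    Tendsto (B l) (𝓝[<] (π:ℝ)) (𝓝 (π/2 + Real.arcsin (Real.sqrt 2 * l))) := by
  have hk0 : (0:ℝ) < 1 - 2*l^2 := by linarith
  set k : ℝ := 1 - 2*l^2 with hkdef
  set L : ℝ := π/2 + Real.arcsin (Real.sqrt 2*l) with hLdef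
  have hu0h := u0_gt_half hl
  have hu0p := u0_pos hl
  have humn := um_neg hl
  rw [Metric.tendsto_nhds]
  intro E hE
  -- Step 1: the limit functional J and choice of α
  set Jf : ℝ → ℝ := fun v =>
    Real.arcsin (Real.sqrt 2*l)/2 - Real.arcsin (Real.sqrt 2*l - Real.sqrt 2/v)/2 with hJfdef
  have hJcont : ContinuousAt Jf (u0 l) := by
    apply ContinuousAt.sub continuousAt_const
    apply ContinuousAt.div_const
    exact Real.continuous_arcsin.continuousAt.comp
      (continuousAt_const.sub (continuousAt_const.div continuousAt_id hu0p.ne'))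
  have hJu0 : Jf (u0 l) = L/2 := by
    rw [hJfdef]; simp only
    rw [sqrt2_div_u0 hl, show Real.sqrt 2*l - (1+Real.sqrt 2*l) = -1 by ring,
      Real.arcsin_neg_one, hLdef]; ring
  obtain ⟨α₁, hα₁pos, hα₁⟩ : ∃ α₁ > 0, ∀ v : ℝ, |v - u0 l| < α₁ → |Jf v - L/2| < E/10 := by
    obtain ⟨δ, hδ, hδ'⟩ := Metric.continuousAt_iff.mp hJcont (E/10) (by linarith)
    exact ⟨δ, hδ, fun v hv => by
      have h := hδ' (show dist v (u0 l) < δ by rwa [Real.dist_eq])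
      rwa [Real.dist_eq, hJu0] at h⟩
  set α : ℝ := min (min (1/4) (α₁/2)) ((E/80)^2/2) with hαdef
  have hα0 : 0 < α := lt_min (lt_min (by norm_num) (by linarith)) (by positivity)
  have hα14 : α ≤ 1/4 := le_trans (min_le_left _ _) (min_le_left _ _)
  have hαA : α < α₁ := lt_of_le_of_lt (le_trans (min_le_left _ _) (min_le_right _ _)) (by linarith)
  have hαE : Real.sqrt (2*α) ≤ E/80 := by
    have h2α : 2*α ≤ (E/80)^2 := by
      have := min_le_right (min (1/4) (α₁/2)) ((E/80)^2/2); linarith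
    calc Real.sqrt (2*α) ≤ Real.sqrt ((E/80)^2) := Real.sqrt_le_sqrt h2α
      _ = E/80 := Real.sqrt_sq (by positivity)
  set b : ℝ := u0 l + α with hbdef
  have hbu0 : u0 l < b := by rw [hbdef]; linarith
  set mα : ℝ := Gf l b with hmαdef
  have hmαpos : 0 < mα := Gf_pos hl hbu0
  -- Step 2: choice of T
  set T : ℝ := max (max (u0 l + 1) ((16*|l|+8)/k)) (max 1 (20*Real.sqrt (2/k)/E)) with hTdef
  have hT1 : 1 ≤ T := le_trans (le_max_left 1 _) (le_max_right _ _)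
  have hTu : u0 l + 1 ≤ T := le_trans (le_max_left _ _) (le_max_left _ _)
  have hTk : (16*|l|+8)/k ≤ T := le_trans (le_max_right _ _) (le_max_left _ _)
  have hTE : 20*Real.sqrt (2/k)/E ≤ T := le_trans (le_max_right _ _) (le_max_right _ _)
  have hT0 : 0 < T := lt_of_lt_of_le one_pos hT1
  have hbT : b < T := by rw [hbdef]; linarith
  have hu0T : u0 l < T := by linarith
  have hCτ : 0 < Real.sqrt (2/k) := Real.sqrt_pos.mpr (by positivity)
  have htailE : Real.sqrt (2/k)*T⁻¹ ≤ E/20 := by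
    rw [mul_inv_le_iff₀ hT0]
    have h := mul_le_mul_of_nonneg_left hTE (show (0:ℝ) ≤ E/20 by linarith)
    calc Real.sqrt (2/k) = E/20*(20*Real.sqrt (2/k)/E) := by field_simp
      _ ≤ E/20*T := h
  -- Step 3: choice of σ and the eventual bounds
  set ρmin : ℝ := min (min (mα/2) ((E*mα/(40*T))^2)) (k*α/2) with hρmindef
  have hρminpos : 0 < ρmin :=
    lt_min (lt_min (by linarith) (by positivity)) (by positivity)
  set σ : ℝ := min (min (ρmin/(4*(T^3+T^2))) (1/(6*T^2+4*T))) (k/2) with hσdef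
  have hσ0 : 0 < σ := by
    apply lt_min (lt_min _ _) (by linarith) <;> positivity
  have hρm1 : ρmin ≤ mα/2 := le_trans (min_le_left _ _) (min_le_left _ _)
  have hρm2 : ρmin ≤ (E*mα/(40*T))^2 := le_trans (min_le_left _ _) (min_le_right _ _)
  have hρm3 : ρmin ≤ k*α/2 := min_le_right _ _
  have hσρ : σ ≤ ρmin/(4*(T^3+T^2)) := le_trans (min_le_left _ _) (min_le_left _ _)
  have hσ2' : σ ≤ 1/(6*T^2+4*T) := le_trans (min_le_left _ _) (min_le_right _ _)
  have hσk : σ ≤ k/2 := min_le_right _ _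
  clear_value L Jf α b mα T ρmin σ
  have ev1 : ∀ᶠ θ in 𝓝[<] (π:ℝ), θ ∈ Ioo (π/2) π :=
    eventually_mem_set.mpr (Ioo_mem_nhdsLT_of_mem ⟨by linarith [Real.pi_pos], le_refl π⟩)
  have ev2 : ∀ᶠ θ in 𝓝[<] (π:ℝ), Real.sin θ < σ := by
    have hs : Tendsto Real.sin (𝓝[<] (π:ℝ)) (𝓝 0) := by
      have := (Real.continuous_sin.continuousAt (x := π)).continuousWithinAt
        (s := Iio (π:ℝ))
      rwa [ContinuousWithinAt, Real.sin_pi] at this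
    exact hs.eventually_lt_const hσ0
  have ev3 : ∀ᶠ θ in 𝓝[<] (π:ℝ), Real.cos θ + 1 < σ := by
    have hs : Tendsto (fun θ => Real.cos θ + 1) (𝓝[<] (π:ℝ)) (𝓝 0) := by
      have h1 : Tendsto Real.cos (𝓝[<] (π:ℝ)) (𝓝 (-1)) := by
        have := (Real.continuous_cos.continuousAt (x := π)).continuousWithinAt
          (s := Iio (π:ℝ))
        rwa [ContinuousWithinAt, Real.cos_pi] at this
      have := h1.add (tendsto_const_nhds (x := (1:ℝ)))
      simpa using this
    exact hs.eventually_lt_const hσ0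
  filter_upwards [ev1, ev2, ev3] with θ hθI hθe hθc
  set e : ℝ := Real.sin θ with hedef
  set c : ℝ := Real.cos θ with hcdef
  have he0 : 0 < e := Real.sin_pos_of_pos_of_lt_pi (by linarith [Real.pi_pos, hθI.1]) hθI.2
  have hc1 : -1 ≤ c := Real.neg_one_le_cos θ
  have hc1' : (0:ℝ) ≤ c + 1 := by linarith
  have hck : c + 1 ≤ k/2 := le_trans hθc.le hσk
  set ρ : ℝ := 2*e*T^3 + 2*(c+1)*T^2 with hρdef
  have hρ0 : 0 ≤ ρ := by
    rw [hρdef]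
    have := mul_nonneg (mul_nonneg (by norm_num : (0:ℝ) ≤ 2) he0.le) (pow_nonneg hT0.le 3)
    have := mul_nonneg (mul_nonneg (by norm_num : (0:ℝ) ≤ 2) hc1') (pow_nonneg hT0.le 2)
    linarith
  have hρub : ρ < ρmin/2 := by
    rw [hρdef]
    apply aux_rho_lt e c T σ ρmin hT0 hθe hθc he0.le hc1'
    rw [le_div_iff₀ (by positivity : (0:ℝ) < 4*(T^3+T^2))] at hσρ
    linarith
  have hρmα : ρ < mα/2 := by linarith
  have hρE : ρ < (E*mα/(40*T))^2 := by linarith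
  have hρkα : ρ < k*α/2 := by linarith
  have hρ' : 6*e*T^2 + 4*(c+1)*T ≤ 2 := by
    apply aux_rho' e c T σ hT0 hθe hθc he0.le hc1'
    rw [le_div_iff₀ (by positivity : (0:ℝ) < 6*T^2+4*T)] at hσ2'
    linarith
  have happrox : ∀ u ∈ Icc (0:ℝ) T, |gf l e c u - Gf l u| ≤ ρ := by
    rintro u ⟨hu0, huT⟩
    rw [hρdef]
    exact aux_approx l e c u T he0.le hc1' hu0 huT
  have hukk : ∀ u : ℝ, T ≤ u → 16*|l|+8 ≤ k*u := by
    intro u hu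
    rw [div_le_iff₀ hk0] at hTk
    have h1 := mul_le_mul_of_nonneg_left hu hk0.le
    have h2 : k*T = T*k := mul_comm k T
    linarith
  have hgrow : ∀ u : ℝ, T ≤ u → k/2*u^2 ≤ gf l e c u := fun u hu =>
    aux_grow l e c k u hkdef hk0 he0.le hc1' hck (le_trans hT1 hu) (hukk u hu)
  have hGrow : ∀ u : ℝ, T ≤ u → k/2*u^2 ≤ Gf l u := fun u hu =>
    aux_Grow l k u hkdef hk0 (le_trans hT1 hu) (hukk u hu)
  have hGlb : ∀ u : ℝ, b ≤ u → mα ≤ Gf l u := by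
    intro u hu
    rw [hmαdef]
    exact aux_Gmono hl hbu0 hu
  have hmid_lb : ∀ u ∈ Icc b T, mα/2 ≤ gf l e c u := by
    rintro u ⟨hub, huT⟩
    have hu0' : (0:ℝ) ≤ u := le_trans (by linarith : (0:ℝ) ≤ b) hub
    have hG := hGlb u hub
    have happ := (abs_le.mp (happrox u ⟨hu0', huT⟩)).1
    linarith
  have hpos_ge_b : ∀ u : ℝ, b < u → 0 < gf l e c u := by
    intro u hu
    rcases le_or_gt u T with h|h
    · have := hmid_lb u ⟨hu.le, h⟩; linarith
    · have h1 := hgrow u h.le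
      have h2 := mul_pos (half_pos hk0) (pow_pos (lt_trans hT0 h) 2)
      have h3 : k/2*u^2 = k/2*u^2 := rfl
      linarith [h2]
  have hneg : gf l e c (u0 l - α) < 0 := by
    have hin : u0 l - α ∈ Icc (0:ℝ) T := ⟨by linarith, by linarith⟩
    have happ := (abs_le.mp (happrox _ hin)).2
    have hGneg := aux_Gneg hl hα0 hα14
    rw [← hkdef] at hGneg
    linarith
  have hcont_gf : Continuous (gf l e c) := gf_cont l e c
  have hgfT : 0 < gf l e c T := hpos_ge_b T hbT
  obtain ⟨x, hxI, hx0⟩ : ∃ x ∈ Ioo (u0 l - α) T, gf l e c x = 0 := by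
    have h := intermediate_value_Ioo (show u0 l - α ≤ T by linarith) hcont_gf.continuousOn
    exact h ⟨hneg, hgfT⟩
  set S : Set ℝ := {u : ℝ | gf l e c u = 0} with hSdef
  have hSne : S.Nonempty := ⟨x, hx0⟩
  have hSbdd : BddAbove S := by
    refine ⟨b, fun u hu => ?_⟩
    by_contra hub
    push_neg at hub
    exact (hpos_ge_b u hub).ne' hu
  have hScl : IsClosed S := isClosed_eq hcont_gf continuous_const
  set R : ℝ := sSup S with hRdef
  have hRmem : R ∈ S := hScl.csSup_mem hSne hSbdd
  have hRroot : gf l e c R = 0 := hRmem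
  have hgR : IsGreatest S R := ⟨hRmem, fun u hu => le_csSup hSbdd hu⟩
  have hRle : R ≤ b := by
    apply csSup_le hSne
    intro u hu
    by_contra h
    push_neg at h
    exact (hpos_ge_b u h).ne' hu
  have hRgt : u0 l - α < R := lt_of_lt_of_le hxI.1 (le_csSup hSbdd hx0)
  have hR14 : 1/4 ≤ R := by linarith
  have hRpos : 0 < R := by linarith
  have hgpos : ∀ u : ℝ, R < u → 0 < gf l e c u := by
    intro u hu
    rcases lt_or_ge b u with h|h
    · exact hpos_ge_b u h
    · rcases lt_trichotomy (gf l e c u) 0 with hlt|heq|hgt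
      · exfalso
        obtain ⟨y, hyI, hy0⟩ : ∃ y ∈ Ioo u T, gf l e c y = 0 := by
          have h2 := intermediate_value_Ioo (show u ≤ T by linarith) hcont_gf.continuousOn
          exact h2 ⟨hlt, hgfT⟩
        exact absurd (le_csSup hSbdd hy0) (not_le.mpr (lt_trans hu hyI.1))
      · exact absurd (le_csSup hSbdd heq) (not_le.mpr hu)
      · exact hgt
  have hmvt : ∀ u ∈ Icc R b, 2*(u - R) ≤ gf l e c u := by
    have hconv : Convex ℝ (Icc (u0 l - α) b) := convex_Icc _ _
    have hdiff : DifferentiableOn ℝ (gf l e c) (interior (Icc (u0 l - α) b)) :=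
      fun y _ => (gf_hasDerivAt l e c y).differentiableAt.differentiableWithinAt
    have hge : ∀ y ∈ interior (Icc (u0 l - α) b), 2 ≤ deriv (gf l e c) y := by
      intro y hy
      rw [interior_Icc] at hy
      rw [(gf_hasDerivAt l e c y).deriv]
      apply aux_gd hl e c y T he0.le hc1' (by linarith [hy.1]) (by rw [hbdef] at hy; linarith [hy.2]) hρ'
      rw [abs_le]
      constructor
      · linarith [hy.1]
      · rw [hbdef] at hy; linarith [hy.2]
    rintro u ⟨hu1, hu2⟩
    have hRD : R ∈ Icc (u0 l - α) b := ⟨hRgt.le, hRle⟩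
    have huD : u ∈ Icc (u0 l - α) b := ⟨by linarith, hu2⟩
    have := hconv.mul_sub_le_image_sub_of_le_deriv hcont_gf.continuousOn hdiff hge
      R hRD u huD hu1
    rw [hRroot] at this
    linarith
  -- the integrand φ
  set φ : ℝ → ℝ := fun u => 1/(u*Real.sqrt (gf l e c u)) with hφdef
  set ψ : ℝ → ℝ := fun u => 1/(u*Real.sqrt (Gf l u)) with hψdef
  have hφm : Measurable φ := by
    apply Measurable.div measurable_const
    exact measurable_id.mul (Real.continuous_sqrt.measurable.comp hcont_gf.measurable)
  have hφnn : ∀ u : ℝ, 0 < u → 0 ≤ φ u := fun u hu =>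
    div_nonneg zero_le_one (mul_nonneg hu.le (Real.sqrt_nonneg _))
  have hψnn : ∀ u : ℝ, 0 < u → 0 ≤ ψ u := fun u hu =>
    div_nonneg zero_le_one (mul_nonneg hu.le (Real.sqrt_nonneg _))
  have hb0 : 0 < b := by linarith
  -- piece 1 : (R, b]
  set D1 : ℝ → ℝ := fun u => 4*(u - R) ^ (-(1/2) : ℝ) with hD1def
  have hD1int : IntegrableOn D1 (Ioc R b) := by
    have h1 : IntervalIntegrable (fun x : ℝ => x ^ (-(1/2):ℝ)) volume 0 (b - R) :=
      intervalIntegral.intervalIntegrable_rpow' (by norm_num)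
    have h2 := (h1.comp_sub_right R).const_mul 4
    rw [zero_add, sub_add_cancel] at h2
    rw [hD1def]
    rwa [intervalIntegrable_iff_integrableOn_Ioc_of_le hRle] at h2
  have hD1val : ∫ u in Ioc R b, D1 u = 8*Real.sqrt (b - R) := by
    rw [← intervalIntegral.integral_of_le hRle, hD1def]
    simp only
    rw [intervalIntegral.integral_const_mul,
      intervalIntegral.integral_comp_sub_right (fun x : ℝ => x ^ (-(1/2):ℝ)) R,
      sub_self, integral_rpow (Or.inl (by norm_num : (-1:ℝ) < -(1/2)))]
    rw [Real.zero_rpow (by norm_num : (-(1/2):ℝ) + 1 ≠ 0), Real.sqrt_eq_rpow]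
    norm_num
    rw [div_eq_mul_inv, show ((1:ℝ)/2)⁻¹ = 2 from by norm_num]
    ring
  have hφle1 : ∀ u ∈ Ioc R b, φ u ≤ D1 u := by
    rintro u ⟨hu1, hu2⟩
    have hgf2 : 2*(u - R) ≤ gf l e c u := hmvt u ⟨hu1.le, hu2⟩
    have huR : 0 < u - R := by linarith
    have hup : 0 < u := lt_trans hRpos hu1
    have hgp : 0 < gf l e c u := hgpos u hu1
    have hsg : Real.sqrt (u - R) ≤ Real.sqrt (gf l e c u) := Real.sqrt_le_sqrt (by linarith)
    have hsgpos : 0 < Real.sqrt (u - R) := Real.sqrt_pos.mpr huR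
    have hD1u : D1 u = 4/Real.sqrt (u - R) := by
      rw [hD1def]; simp only
      rw [Real.rpow_neg huR.le, Real.sqrt_eq_rpow]
      exact (div_eq_mul_inv 4 _).symm
    rw [hD1u, hφdef]; simp only
    rw [div_le_div_iff₀ (mul_pos hup (Real.sqrt_pos.mpr hgp)) hsgpos]
    have h4u : 1 ≤ 4*u := by linarith
    linarith [mul_le_mul h4u hsg hsgpos.le (show (0:ℝ) ≤ 4*u by linarith),
      show 4*u*Real.sqrt (gf l e c u) = 4*(u*Real.sqrt (gf l e c u)) from by ring]
  have hφint1 : IntegrableOn φ (Ioc R b) := by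
    apply Integrable.mono' hD1int hφm.aestronglyMeasurable
    filter_upwards [ae_restrict_mem measurableSet_Ioc] with u hu
    rw [Real.norm_eq_abs, abs_of_nonneg (hφnn u (lt_trans hRpos hu.1))]
    exact hφle1 u hu
  have hp1 : ∫ u in Ioc R b, φ u ≤ E/10 := by
    have h1 : ∫ u in Ioc R b, φ u ≤ ∫ u in Ioc R b, D1 u :=
      setIntegral_mono_on hφint1 hD1int measurableSet_Ioc hφle1
    have h2 : Real.sqrt (b - R) ≤ Real.sqrt (2*α) := Real.sqrt_le_sqrt (by rw [hbdef]; linarith)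
    calc ∫ u in Ioc R b, φ u ≤ 8*Real.sqrt (b-R) := by rw [← hD1val]; exact h1
      _ ≤ 8*Real.sqrt (2*α) := by linarith
      _ ≤ 8*(E/80) := by linarith [hαE]
      _ ≤ E/10 := by linarith
  have hp1nn : 0 ≤ ∫ u in Ioc R b, φ u :=
    setIntegral_nonneg measurableSet_Ioc (fun u hu => hφnn u (lt_trans hRpos hu.1))
  -- middle piece
  obtain ⟨hψint_b, hψval_b⟩ := psi_int hl hbu0
  obtain ⟨hψint_T, hψval_T⟩ := psi_int hl hu0T
  have hψint2 : IntegrableOn ψ (Ioc b T) := by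
    rw [hψdef]; exact hψint_b.mono_set Ioc_subset_Ioi_self
  have hψint3 : IntegrableOn ψ (Ioi T) := by rw [hψdef]; exact hψint_T
  have hmidptw : ∀ u ∈ Ioc b T, |φ u - ψ u| ≤ Real.sqrt ρ * (4/mα) := by
    rintro u ⟨hu1, hu2⟩
    have hup : 0 < u := lt_trans hb0 hu1
    have hg2 : mα/2 ≤ gf l e c u := hmid_lb u ⟨hu1.le, hu2⟩
    have hG2 : mα ≤ Gf l u := hGlb u hu1.le
    have hgp : 0 < gf l e c u := by linarith
    have hGp : 0 < Gf l u := by linarith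
    have happ := happrox u ⟨hup.le, hu2⟩
    have hsg : 0 < Real.sqrt (gf l e c u) := Real.sqrt_pos.mpr hgp
    have hsG : 0 < Real.sqrt (Gf l u) := Real.sqrt_pos.mpr hGp
    have hid : φ u - ψ u = (Real.sqrt (Gf l u) - Real.sqrt (gf l e c u))
        /(u*Real.sqrt (gf l e c u)*Real.sqrt (Gf l u)) := by
      rw [hφdef, hψdef]; simp only; field_simp
    rw [hid, abs_div, abs_of_pos (mul_pos (mul_pos hup hsg) hsG)]
    have hnum : |Real.sqrt (Gf l u) - Real.sqrt (gf l e c u)| ≤ Real.sqrt ρ := by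
      refine le_trans (abs_sqrt_sub_sqrt_le hGp.le hgp.le) (Real.sqrt_le_sqrt ?_)
      rw [abs_sub_comm]; exact happ
    have hAB : mα/2 ≤ Real.sqrt (mα/2) * Real.sqrt mα := by
      rw [← Real.sqrt_mul (by linarith : (0:ℝ) ≤ mα/2) mα]
      calc mα/2 = Real.sqrt ((mα/2)^2) := (Real.sqrt_sq (by linarith)).symm
        _ ≤ Real.sqrt (mα/2*mα) := Real.sqrt_le_sqrt (by
            have : (mα/2)*(mα/2) ≤ (mα/2)*mα :=
              mul_le_mul_of_nonneg_left (by linarith) (by linarith)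
            calc (mα/2)^2 = (mα/2)*(mα/2) := sq (mα/2) ▸ rfl
              _ ≤ (mα/2)*mα := this)
    have hsgl : Real.sqrt (mα/2) ≤ Real.sqrt (gf l e c u) := Real.sqrt_le_sqrt hg2
    have hsGl : Real.sqrt mα ≤ Real.sqrt (Gf l u) := Real.sqrt_le_sqrt hG2
    have hprod : Real.sqrt (mα/2) * Real.sqrt mα
        ≤ Real.sqrt (gf l e c u) * Real.sqrt (Gf l u) :=
      mul_le_mul hsgl hsGl (Real.sqrt_nonneg _) hsg.le
    have hu12 : (1:ℝ)/2 ≤ u := by linarith [hu0h]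
    have hden : mα/4 ≤ u*Real.sqrt (gf l e c u)*Real.sqrt (Gf l u) := by
      have h1 : mα/2 ≤ Real.sqrt (gf l e c u) * Real.sqrt (Gf l u) := le_trans hAB hprod
      have h2 := mul_le_mul hu12 h1 (by linarith) hup.le
      calc mα/4 = (1/2)*(mα/2) := by ring
        _ ≤ u*(Real.sqrt (gf l e c u) * Real.sqrt (Gf l u)) := h2
        _ = u*Real.sqrt (gf l e c u)*Real.sqrt (Gf l u) := by ring
    calc |Real.sqrt (Gf l u) - Real.sqrt (gf l e c u)|
        /(u*Real.sqrt (gf l e c u)*Real.sqrt (Gf l u))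
        ≤ Real.sqrt ρ/(mα/4) :=
          div_le_div₀ (Real.sqrt_nonneg _) hnum (by linarith) hden
      _ = Real.sqrt ρ * (4/mα) := by
          field_simp
  have hsqρ : Real.sqrt ρ * (4/mα) * T ≤ E/10 := by
    have h1 : Real.sqrt ρ < E*mα/(40*T) := by
      have h2 : Real.sqrt ρ < Real.sqrt ((E*mα/(40*T))^2) := by
        apply (Real.sqrt_lt_sqrt hρ0 hρE)
      rwa [Real.sqrt_sq (by positivity)] at h2
    rw [show Real.sqrt ρ * (4/mα) * T = Real.sqrt ρ * (4*T/mα) by ring]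
    have h3 : 0 < 4*T/mα := by positivity
    have h4 := mul_le_mul_of_nonneg_right h1.le h3.le
    calc Real.sqrt ρ * (4*T/mα) ≤ E*mα/(40*T) * (4*T/mα) := h4
      _ = E/10 := by field_simp; ring
  have hφbd2 : ∀ u ∈ Ioc b T, φ u ≤ 1/(b*Real.sqrt (mα/2)) := by
    rintro u ⟨hu1, hu2⟩
    have hup : 0 < u := lt_trans hb0 hu1
    have hg2 : mα/2 ≤ gf l e c u := hmid_lb u ⟨hu1.le, hu2⟩
    rw [hφdef]; simp only
    apply one_div_le_one_div_of_le (by positivity)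
    exact mul_le_mul hu1.le (Real.sqrt_le_sqrt hg2) (Real.sqrt_nonneg _) hup.le
  have hφint2 : IntegrableOn φ (Ioc b T) := by
    apply Integrable.mono' (f := φ) (g := fun _ : ℝ => 1/(b*Real.sqrt (mα/2)))
      (integrableOn_const measure_Ioc_lt_top.ne) hφm.aestronglyMeasurable
    filter_upwards [ae_restrict_mem measurableSet_Ioc] with u hu
    rw [Real.norm_eq_abs, abs_of_nonneg (hφnn u (lt_trans hb0 hu.1))]
    exact hφbd2 u hu
  have hmid : |∫ u in Ioc b T, (φ u - ψ u)| ≤ E/10 := by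
    have hμ : volume (Ioc b T) < ⊤ := measure_Ioc_lt_top
    have h0 := norm_setIntegral_le_of_norm_le_const hμ
      (f := fun u => φ u - ψ u) (C := Real.sqrt ρ * (4/mα))
      (fun u hu => by rw [Real.norm_eq_abs]; exact hmidptw u hu)
    rw [Real.norm_eq_abs] at h0
    have hvol : (volume (Ioc b T)).toReal = T - b := by
      rw [Real.volume_Ioc, ENNReal.toReal_ofReal (by linarith)]
    rw [measureReal_def, hvol] at h0
    have hC0 : 0 ≤ Real.sqrt ρ * (4/mα) := by positivity
    have h5 : Real.sqrt ρ * (4/mα) * (T - b) ≤ Real.sqrt ρ * (4/mα) * T :=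
      mul_le_mul_of_nonneg_left (by linarith) hC0
    linarith
  -- tails
  have hint_rpow : IntegrableOn (fun u : ℝ => u ^ (-2:ℝ)) (Ioi T) :=
    integrableOn_Ioi_rpow_of_lt (by norm_num) hT0
  have hval_rpow : ∫ u in Ioi T, u ^ (-2:ℝ) = T⁻¹ := by
    rw [integral_Ioi_rpow_of_lt (by norm_num) hT0]
    norm_num
    rw [Real.rpow_neg_one]
  have hsqk : Real.sqrt (2/k) = (Real.sqrt (k/2))⁻¹ := by
    rw [← Real.sqrt_inv]
    congr 1
    field_simp
  have hsqk2 : 0 < Real.sqrt (k/2) := Real.sqrt_pos.mpr (by positivity)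
  have htail_bound : ∀ γ : ℝ → ℝ, (∀ u : ℝ, T ≤ u → k/2*u^2 ≤ γ u) →
      ∀ u ∈ Ioi T, 1/(u*Real.sqrt (γ u)) ≤ Real.sqrt (2/k) * u ^ (-2:ℝ) := by
    intro γ hγ u hu
    rw [mem_Ioi] at hu
    have hup : 0 < u := lt_trans hT0 hu
    have h1 : Real.sqrt (k/2*u^2) = Real.sqrt (k/2)*u := by
      rw [Real.sqrt_mul (by positivity : (0:ℝ) ≤ k/2), Real.sqrt_sq hup.le]
    have h2 : Real.sqrt (k/2)*u ≤ Real.sqrt (γ u) := by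
      rw [← h1]; exact Real.sqrt_le_sqrt (hγ u hu.le)
    have h3 : Real.sqrt (k/2)*u^2 ≤ u*Real.sqrt (γ u) := by
      calc Real.sqrt (k/2)*u^2 = u*(Real.sqrt (k/2)*u) := by ring
        _ ≤ u*Real.sqrt (γ u) := mul_le_mul_of_nonneg_left h2 hup.le
    have h4 : 1/(u*Real.sqrt (γ u)) ≤ 1/(Real.sqrt (k/2)*u^2) :=
      one_div_le_one_div_of_le (by positivity) h3
    have h5 : u ^ (-2:ℝ) = (u^2)⁻¹ := by
      rw [show (-2:ℝ) = -((2:ℕ):ℝ) by norm_num, Real.rpow_neg hup.le, Real.rpow_natCast]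
    rw [h5, hsqk]
    calc 1/(u*Real.sqrt (γ u)) ≤ 1/(Real.sqrt (k/2)*u^2) := h4
      _ = (Real.sqrt (k/2))⁻¹ * (u^2)⁻¹ := by
          rw [one_div, mul_inv]
  have hrint : IntegrableOn (fun u : ℝ => Real.sqrt (2/k) * u ^ (-2:ℝ)) (Ioi T) :=
    hint_rpow.const_mul _
  have hrval : ∫ u in Ioi T, Real.sqrt (2/k) * u ^ (-2:ℝ) = Real.sqrt (2/k) * T⁻¹ := by
    rw [MeasureTheory.integral_const_mul, hval_rpow]
  have hφtail_le : ∀ u ∈ Ioi T, φ u ≤ Real.sqrt (2/k) * u ^ (-2:ℝ) := by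
    intro u hu
    rw [hφdef]
    exact htail_bound (gf l e c) hgrow u hu
  have hψtail_le : ∀ u ∈ Ioi T, ψ u ≤ Real.sqrt (2/k) * u ^ (-2:ℝ) := by
    intro u hu
    rw [hψdef]
    exact htail_bound (Gf l) hGrow u hu
  have hφint3 : IntegrableOn φ (Ioi T) := by
    apply Integrable.mono' hrint hφm.aestronglyMeasurable
    filter_upwards [ae_restrict_mem measurableSet_Ioi] with u hu
    rw [Real.norm_eq_abs, abs_of_nonneg (hφnn u (lt_trans hT0 hu))]
    exact hφtail_le u hu
  have htφ_ub : ∫ u in Ioi T, φ u ≤ E/20 := by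
    have h1 := setIntegral_mono_on hφint3 hrint measurableSet_Ioi hφtail_le
    rw [hrval] at h1
    calc ∫ u in Ioi T, φ u ≤ Real.sqrt (2/k) * T⁻¹ := h1
      _ ≤ E/20 := htailE
  have htψ_ub : ∫ u in Ioi T, ψ u ≤ E/20 := by
    have h1 := setIntegral_mono_on hψint3 hrint measurableSet_Ioi hψtail_le
    rw [hrval] at h1
    calc ∫ u in Ioi T, ψ u ≤ Real.sqrt (2/k) * T⁻¹ := h1
      _ ≤ E/20 := htailE
  have htφ_nn : 0 ≤ ∫ u in Ioi T, φ u :=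
    setIntegral_nonneg measurableSet_Ioi (fun u hu => hφnn u (lt_trans hT0 hu))
  have htψ_nn : 0 ≤ ∫ u in Ioi T, ψ u :=
    setIntegral_nonneg measurableSet_Ioi (fun u hu => hψnn u (lt_trans hT0 hu))
  -- splittings
  have hφint_b : IntegrableOn φ (Ioi b) := by
    rw [← Ioc_union_Ioi_eq_Ioi hbT.le]
    exact hφint2.union hφint3
  have e1 : ∫ u in Ioi R, φ u = (∫ u in Ioc R b, φ u) + ∫ u in Ioi b, φ u := by
    rw [← Ioc_union_Ioi_eq_Ioi hRle,
      setIntegral_union (Ioc_disjoint_Ioi le_rfl) measurableSet_Ioi hφint1 hφint_b]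
  have e2 : ∫ u in Ioi b, φ u = (∫ u in Ioc b T, φ u) + ∫ u in Ioi T, φ u := by
    rw [← Ioc_union_Ioi_eq_Ioi hbT.le,
      setIntegral_union (Ioc_disjoint_Ioi le_rfl) measurableSet_Ioi hφint2 hφint3]
  have e3 : ∫ u in Ioi b, ψ u = (∫ u in Ioc b T, ψ u) + ∫ u in Ioi T, ψ u := by
    rw [← Ioc_union_Ioi_eq_Ioi hbT.le,
      setIntegral_union (Ioc_disjoint_Ioi le_rfl) measurableSet_Ioi hψint2 hψint3]
  have hmid_eq : ∫ u in Ioc b T, (φ u - ψ u)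
      = (∫ u in Ioc b T, φ u) - ∫ u in Ioc b T, ψ u := integral_sub hφint2 hψint2
  -- ψ integral over (b,∞) is Jf b
  have hJb_eq : (∫ u in Ioi b, ψ u) = Jf b := by
    rw [hψdef] at *
    rw [hψval_b, hJfdef]
  have hJb : |Jf b - L/2| < E/10 := by
    apply hα₁
    rw [hbdef, add_sub_cancel_left, abs_of_pos hα0]
    exact hαA
  -- change of variables
  have hBval : B l θ = 2 * ∫ u in Ioi R, φ u := by
    rw [hφdef]
    exact cov l θ R he0 hgR
  rw [Real.dist_eq, hBval]
  have key : |(∫ u in Ioi R, φ u) - L/2| < E/2 := by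
    have hdecomp : (∫ u in Ioi R, φ u) - L/2
        = (∫ u in Ioc R b, φ u) + (∫ u in Ioc b T, (φ u - ψ u))
          + ((∫ u in Ioi T, φ u) - ∫ u in Ioi T, ψ u) + (Jf b - L/2) := by
      rw [hmid_eq, e1, e2, ← hJb_eq, e3]; ring
    rw [hdecomp]
    have a1 : |∫ u in Ioc R b, φ u| ≤ E/10 := by
      rw [abs_of_nonneg hp1nn]; exact hp1
    have a3 : |(∫ u in Ioi T, φ u) - ∫ u in Ioi T, ψ u| ≤ E/20 := by
      rw [abs_le]; constructor <;> linarith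
    calc |(∫ u in Ioc R b, φ u) + (∫ u in Ioc b T, (φ u - ψ u))
          + ((∫ u in Ioi T, φ u) - ∫ u in Ioi T, ψ u) + (Jf b - L/2)|
        ≤ |(∫ u in Ioc R b, φ u) + (∫ u in Ioc b T, (φ u - ψ u))
          + ((∫ u in Ioi T, φ u) - ∫ u in Ioi T, ψ u)| + |Jf b - L/2| := abs_add_le _ _
      _ ≤ |(∫ u in Ioc R b, φ u) + (∫ u in Ioc b T, (φ u - ψ u))|
          + |(∫ u in Ioi T, φ u) - ∫ u in Ioi T, ψ u| + |Jf b - L/2| := by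
            linarith [abs_add_le ((∫ u in Ioc R b, φ u) + (∫ u in Ioc b T, (φ u - ψ u)))
              ((∫ u in Ioi T, φ u) - ∫ u in Ioi T, ψ u)]
      _ ≤ |∫ u in Ioc R b, φ u| + |∫ u in Ioc b T, (φ u - ψ u)|
          + |(∫ u in Ioi T, φ u) - ∫ u in Ioi T, ψ u| + |Jf b - L/2| := by
            linarith [abs_add_le (∫ u in Ioc R b, φ u) (∫ u in Ioc b T, (φ u - ψ u))]
      _ < E/2 := by linarith
  calc |2 * (∫ u in Ioi R, φ u) - L| = 2*|(∫ u in Ioi R, φ u) - L/2| := by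
        rw [show 2 * (∫ u in Ioi R, φ u) - L = 2*((∫ u in Ioi R, φ u) - L/2) by ring,
          abs_mul, abs_of_nonneg (by norm_num : (0:ℝ) ≤ 2)]
    _ < E := by linarith

lemma Bsym (l θ : ℝ) : B l (-θ) = - B (-l) θ := by
  have hQ : ∀ z, Qt l (-θ) z = Qt (-l) θ z := by
    intro z; simp only [Qt, Real.sin_neg, Real.cos_neg]; ring
  have hr : rt l (-θ) = rt (-l) θ := by
    unfold rt; congr 1; ext z; simp only [mem_setOf_eq, hQ z]
  rw [B, B, hr]
  have hpt : ∀ z ∈ Ioi (rt (-l) θ), Real.sin (-θ)/(z*Real.sqrt (Qt l (-θ) z))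
      = -(Real.sin θ/(z*Real.sqrt (Qt (-l) θ z))) := by
    intro z _; rw [hQ z, Real.sin_neg]; ring
  rw [setIntegral_congr_fun measurableSet_Ioi hpt, MeasureTheory.integral_neg]
  ring


end S13

/-- lim_{θ→±π∓} B(θ) = ±π/2 + arcsin(√2 λ̃). -/
theorem stmt13 (lam : ℝ) (hlam : 2 * lam ^ 2 < 1) :
    Filter.Tendsto (B lam) (nhdsWithin Real.pi (Set.Iio Real.pi))
        (nhds (Real.pi / 2 + Real.arcsin (Real.sqrt 2 * lam))) ∧
    Filter.Tendsto (B lam) (nhdsWithin (-Real.pi) (Set.Ioi (-Real.pi)))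
        (nhds (-(Real.pi / 2) + Real.arcsin (Real.sqrt 2 * lam))) := by
  constructor
  · exact S13.main lam hlam
  · have hlam' : 2*(-lam)^2 < 1 := by rw [show (-lam)^2 = lam^2 by ring]; exact hlam
    have h1 := S13.main (-lam) hlam'
    have hneg : Tendsto (fun θ : ℝ => -θ) (𝓝[>] (-π)) (𝓝[<] (π:ℝ)) := by
      rw [tendsto_nhdsWithin_iff]
      constructor
      · have h2 : Tendsto (fun θ : ℝ => -θ) (𝓝 (-π)) (𝓝 (π:ℝ)) := by
          simpa using (continuous_neg.tendsto (-π : ℝ))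
        exact h2.mono_left nhdsWithin_le_nhds
      · filter_upwards [self_mem_nhdsWithin] with θ hθ
        rw [mem_Iio]
        rw [mem_Ioi] at hθ
        linarith
    have h4 := (h1.comp hneg).neg
    have h5 : (fun θ : ℝ => -(B (-lam) (-θ))) = B lam := by
      funext θ
      have h := S13.Bsym lam (-θ)
      rw [neg_neg] at h
      rw [h]
    have h6 : -(π/2 + Real.arcsin (Real.sqrt 2 * -lam)) = -(π/2) + Real.arcsin (Real.sqrt 2*lam) := by
      rw [show Real.sqrt 2 * -lam = -(Real.sqrt 2*lam) by ring, Real.arcsin_neg]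
      ring
    have h7 : Tendsto (fun θ : ℝ => -(B (-lam) (-θ))) (𝓝[>] (-π))
        (𝓝 (-(π/2 + Real.arcsin (Real.sqrt 2 * -lam)))) := h4
    rw [h5, h6] at h7
    exact h7

end
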